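/- Let S be a semitopological monoid with open left shifts (or open right shifts) and let ~ be a congruence on S. Then S/~ with the quotient topology is Hausdorff if and only if ~ is closed in S × S. -/
import Mathlib


/-- Let S be a semitopological monoid with open left (or right) shifts, and ~ a
congruence on S. Then S/~ with the quotient topology is Hausdorff iff ~ is closed
in S × S. -/
theorem stmt_3 {S : Type*} [Monoid S] [TopologicalSpace S]
    (hcont : ∀ a : S, Continuous (fun x => a * x) ∧ Continuous (fun x => x * a))
    (hopen : (∀ a : S, IsOpenMap (fun x => a * x)) ∨ (∀ a : S, IsOpenMap (fun x => x * a)))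
    (c : Con S) :
    T2Space (Quotient c.toSetoid) ↔ IsClosed {p : S × S | c p.1 p.2} := by
  set q : S → Quotient c.toSetoid := Quotient.mk _ with hq
  have hqc : Continuous q := continuous_quotient_mk'
  -- the quotient map is open
  have hsat : ∀ U : Set S, IsOpen U → IsOpen {x : S | ∃ u ∈ U, c x u} := by
    intro U hU
    rw [isOpen_iff_mem_nhds]
    rintro x ⟨u, huU, hxu⟩
    rcases hopen with hL | hR
    · have hW : IsOpen {s : S | u * s ∈ U} := hU.preimage (hcont u).1
      have h1 : (1 : S) ∈ {s : S | u * s ∈ U} := by simpa using huU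
      have hxW : IsOpen ((fun s => x * s) '' {s : S | u * s ∈ U}) := hL x _ hW
      refine Filter.mem_of_superset (hxW.mem_nhds ⟨1, h1, by simp⟩) ?_
      rintro _ ⟨w, hw, rfl⟩
      exact ⟨u * w, hw, c.mul hxu (c.refl w)⟩
    · have hW : IsOpen {s : S | s * u ∈ U} := hU.preimage (hcont u).2
      have h1 : (1 : S) ∈ {s : S | s * u ∈ U} := by simpa using huU
      have hxW : IsOpen ((fun s => s * x) '' {s : S | s * u ∈ U}) := hR x _ hW
      refine Filter.mem_of_superset (hxW.mem_nhds ⟨1, h1, by simp⟩) ?_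
      rintro _ ⟨w, hw, rfl⟩
      exact ⟨w * u, hw, c.mul (c.refl w) hxu⟩
  have hqo : IsOpenMap q := by
    intro U hU
    rw [isOpen_coinduced (f := q)]
    have : q ⁻¹' (q '' U) = {x : S | ∃ u ∈ U, c x u} := by
      ext x
      simp only [Set.mem_preimage, Set.mem_image, Set.mem_setOf_eq, hq]
      constructor
      · rintro ⟨u, huU, h⟩
        exact ⟨u, huU, c.symm (Quotient.eq'.mp h)⟩
      · rintro ⟨u, huU, h⟩
        exact ⟨u, huU, Quotient.eq'.mpr (c.symm h)⟩
    rw [this]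
    exact hsat U hU
  constructor
  · intro hT2
    have : {p : S × S | c p.1 p.2} =
        (fun p : S × S => (q p.1, q p.2)) ⁻¹' {p | p.1 = p.2} := by
      ext p
      simp only [Set.mem_preimage, Set.mem_setOf_eq, hq]
      exact ⟨fun h => Quotient.sound h, fun h => Quotient.exact h⟩
    rw [this]
    exact isClosed_diagonal.preimage ((hqc.comp continuous_fst).prodMk
      (hqc.comp continuous_snd))
  · intro hcl
    refine ⟨fun a b hab => ?_⟩
    obtain ⟨x, rfl⟩ := Quotient.exists_rep a
    obtain ⟨y, rfl⟩ := Quotient.exists_rep b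
    have hxy : ¬ c x y := fun h => hab (Quotient.eq'.mpr h)
    have : (x, y) ∈ {p : S × S | c p.1 p.2}ᶜ := hxy
    obtain ⟨V, W, hV, hW, hxV, hyW, hVW⟩ :=
      isOpen_prod_iff.mp hcl.isOpen_compl x y this
    refine ⟨q '' V, q '' W, hqo V hV, hqo W hW, ⟨x, hxV, rfl⟩, ⟨y, hyW, rfl⟩, ?_⟩
    rw [Set.disjoint_left]
    rintro _ ⟨v, hvV, rfl⟩ ⟨w, hwW, hvw⟩
    exact hVW (Set.mk_mem_prod hvV hwW) (Quotient.eq'.mp hvw.symm)
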